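/- Let p be a positive integer, let L : ℝ^p → ℝ be convex and differentiable with K-Lipschitz gradient (K > 0), and let w* ∈ ℝ^p satisfy ∇L(w*) = 0. Let G, D_w ≥ 0 with ‖∇L(w)‖ ≤ G for all w ∈ ℝ^p. Let (Ω, ℱ, ℙ) be a probability space, T a positive integer, and for t = 1, …, T let w_t, ∇_t, Δ_t : Ω → ℝ^p be square-integrable random vectors such that: (i) w_{t+1} = w_t − η·Δ_t almost surely for t = 1, …, T−1; (ii) each w_t is measurable with respect to a sub-σ-algebra 𝒢_t, each Δ_t and ∇_t is measurable, and 𝔼[∇_t | 𝒢_t] = ∇L(w_t) almost surely; (iii) ‖w_t − w*‖ ≤ D_w almost surely for all t. Let σ > 0 and B ≥ 0 satisfy, for all t, 2·𝔼[‖∇_t − ∇L(w_t)‖²] + 2·𝔼[‖∇_t − Δ_t‖²] ≤ σ² and 2·𝔼[‖∇_t − Δ_t‖²] ≤ B². If η = min(1/K, D_w/(σ·√T)), then 𝔼[(1/T) ∑_{t=1}^T (L(w_t) − L(w*))] ≤ D_w²·K/T + D_w·σ/√T + 2·B·D_w·(1 + G/(σ·√T)). -/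

import Mathlib

open MeasureTheory RealInnerProductSpace
open Filter Set Topology

section AuxAnalysis

variable {E : Type*} [NormedAddCommGroup E] [InnerProductSpace ℝ E] [CompleteSpace E]

lemma aux_hasDerivAt_line (f : E → ℝ) (hf : Differentiable ℝ f) (x v : E) (t : ℝ) :
    HasDerivAt (fun s : ℝ => f (x + s • v)) ⟪gradient f (x + t • v), v⟫ t := by
  have h1 : HasFDerivAt f (InnerProductSpace.toDual ℝ E (gradient f (x + t • v))) (x + t • v) :=
    hasGradientAt_iff_hasFDerivAt.mp (hf _).hasGradientAt
  have h2 : HasDerivAt (fun s : ℝ => x + s • v) v t := by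
    simpa using ((hasDerivAt_id t).smul_const v).const_add x
  simpa [InnerProductSpace.toDual_apply_apply, Function.comp_def] using h1.comp_hasDerivAt t h2

lemma aux_convex_grad (f : E → ℝ) (hconv : ConvexOn ℝ Set.univ f)
    (hf : Differentiable ℝ f) (x y : E) :
    f x + ⟪gradient f x, y - x⟫ ≤ f y := by
  set v := y - x with hv
  have hd : HasDerivAt (fun s : ℝ => f (x + s • v)) ⟪gradient f x, v⟫ 0 := by
    simpa using aux_hasDerivAt_line f hf x v 0
  have key : ⟪gradient f x, v⟫ ≤ f y - f x := by
    have htend : Tendsto (slope (fun s : ℝ => f (x + s • v)) 0) (𝓝[>] 0)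
        (𝓝 ⟪gradient f x, v⟫) := by
      refine (hasDerivAt_iff_tendsto_slope.mp hd).mono_left (nhdsWithin_mono _ ?_)
      intro z hz
      exact ne_of_gt hz
    refine le_of_tendsto htend ?_
    filter_upwards [Ioc_mem_nhdsGT (by norm_num : (0:ℝ) < 1)] with t ht
    have ht0 : 0 < t := ht.1
    have hconvineq := hconv.2 (mem_univ x) (mem_univ y)
      (by linarith [ht.2] : (0:ℝ) ≤ 1 - t) ht0.le (by ring)
    have hxy : (1 - t) • x + t • y = x + t • v := by
      rw [hv]; rw [smul_sub, sub_smul, one_smul]; abel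
    rw [hxy] at hconvineq
    rw [slope_def_field]
    simp only [zero_smul, add_zero, sub_zero]
    rw [div_le_iff₀ ht0]
    simp only [smul_eq_mul] at hconvineq
    linarith
  linarith

lemma aux_descent (f : E → ℝ) (hf : Differentiable ℝ f) (K : ℝ) (hK : 0 < K)
    (hlip : ∀ u v : E, ‖gradient f u - gradient f v‖ ≤ K * ‖u - v‖) (x y : E) :
    f y ≤ f x + ⟪gradient f x, y - x⟫ + K / 2 * ‖y - x‖ ^ 2 := by
  set v := y - x with hv
  set ψ : ℝ → ℝ := fun s => f (x + s • v) - s * ⟪gradient f x, v⟫ - K / 2 * s ^ 2 * ‖v‖ ^ 2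
    with hψ
  have hψd : ∀ t : ℝ, HasDerivAt ψ
      (⟪gradient f (x + t • v), v⟫ - ⟪gradient f x, v⟫ - K * t * ‖v‖ ^ 2) t := by
    intro t
    have h1 := aux_hasDerivAt_line f hf x v t
    have h2 : HasDerivAt (fun s : ℝ => s * ⟪gradient f x, v⟫) ⟪gradient f x, v⟫ t := by
      simpa using (hasDerivAt_id t).mul_const ⟪gradient f x, v⟫
    have h3 : HasDerivAt (fun s : ℝ => K / 2 * s ^ 2 * ‖v‖ ^ 2) (K * t * ‖v‖ ^ 2) t := by
      have := ((hasDerivAt_pow 2 t).const_mul (K / 2)).mul_const (‖v‖ ^ 2)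
      refine this.congr_deriv ?_
      rw [show (2:ℕ) - 1 = 1 from rfl]
      ring
    exact (h1.sub h2).sub h3
  have hmono : AntitoneOn ψ (Icc (0:ℝ) 1) := by
    refine antitoneOn_of_deriv_nonpos (convex_Icc 0 1) ?_ ?_ ?_
    · exact (Continuous.continuousOn (by
        exact continuous_iff_continuousAt.mpr fun t => (hψd t).continuousAt))
    · intro t ht
      exact ((hψd t).differentiableAt).differentiableWithinAt
    · intro t ht
      rw [interior_Icc] at ht
      rw [(hψd t).deriv]
      have hb : ⟪gradient f (x + t • v) - gradient f x, v⟫ ≤ K * t * ‖v‖ ^ 2 := by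
        calc ⟪gradient f (x + t • v) - gradient f x, v⟫
            ≤ ‖gradient f (x + t • v) - gradient f x‖ * ‖v‖ := real_inner_le_norm _ _
          _ ≤ K * ‖(x + t • v) - x‖ * ‖v‖ := by
              have := hlip (x + t • v) x
              have hvn : (0:ℝ) ≤ ‖v‖ := norm_nonneg _
              nlinarith [norm_nonneg (gradient f (x + t • v) - gradient f x)]
          _ = K * t * ‖v‖ ^ 2 := by
              simp [norm_smul, abs_of_pos ht.1]
              ring
      rw [inner_sub_left] at hb
      linarith
  have h01 := hmono (left_mem_Icc.mpr zero_le_one) (right_mem_Icc.mpr zero_le_one) zero_le_one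
  have hψ0 : ψ 0 = f x := by simp [hψ]
  have hψ1 : ψ 1 = f y - ⟪gradient f x, v⟫ - K / 2 * ‖v‖ ^ 2 := by
    simp [hψ, hv]
  rw [hψ0, hψ1] at h01
  linarith

lemma aux_min_le (f : E → ℝ) (hconv : ConvexOn ℝ Set.univ f) (hf : Differentiable ℝ f)
    (K : ℝ) (hK : 0 < K)
    (hlip : ∀ u v : E, ‖gradient f u - gradient f v‖ ≤ K * ‖u - v‖)
    (u : E) (hu : gradient f u = 0) (y : E) :
    f u + ‖gradient f y‖ ^ 2 / (2 * K) ≤ f y := by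
  have h1 : f u ≤ f (y - (1 / K) • gradient f y) := by
    have := aux_convex_grad f hconv hf u (y - (1 / K) • gradient f y)
    rw [hu] at this
    simpa using this
  have h2 := aux_descent f hf K hK hlip y (y - (1 / K) • gradient f y)
  have he : y - (1 / K) • gradient f y - y = -((1 / K) • gradient f y) := by abel
  rw [he] at h2
  rw [inner_neg_right, real_inner_smul_right, real_inner_self_eq_norm_sq] at h2
  rw [norm_neg, norm_smul] at h2
  have hKne : K ≠ 0 := ne_of_gt hK
  have habs : |1 / K| = 1 / K := abs_of_pos (by positivity)
  rw [Real.norm_eq_abs, habs] at h2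
  have h2' : f (y - (1 / K) • gradient f y) ≤ f y - ‖gradient f y‖ ^ 2 / (2 * K) := by
    have : (1 / K * ‖gradient f y‖) ^ 2 = 1 / K ^ 2 * ‖gradient f y‖ ^ 2 := by ring
    rw [this] at h2
    have hfield : f y + -(1 / K * ‖gradient f y‖ ^ 2) + K / 2 * (1 / K ^ 2 * ‖gradient f y‖ ^ 2)
        = f y - ‖gradient f y‖ ^ 2 / (2 * K) := by
      field_simp
      ring
    linarith [h2, hfield.ge, hfield.le]
  linarith [h1, h2']

lemma aux_cocoercive (L : E → ℝ) (hconv : ConvexOn ℝ Set.univ L) (hdiff : Differentiable ℝ L)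
    (K : ℝ) (hK : 0 < K)
    (hlip : ∀ u v : E, ‖gradient L u - gradient L v‖ ≤ K * ‖u - v‖)
    (wstar : E) (hstar : gradient L wstar = 0) (u : E) :
    ‖gradient L u‖ ^ 2 ≤ K * ⟪gradient L u, u - wstar⟫ := by
  have hA := aux_min_le L hconv hdiff K hK hlip wstar hstar u
  set b := gradient L u with hb
  set φ : E → ℝ := fun z => L z - ⟪b, z⟫ with hφ
  have hφgradAt : ∀ z : E, HasGradientAt φ (gradient L z - b) z := by
    intro z
    have hL : HasFDerivAt L (InnerProductSpace.toDual ℝ E (gradient L z)) z :=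
      hasGradientAt_iff_hasFDerivAt.mp (hdiff z).hasGradientAt
    have hbF : HasFDerivAt (fun z : E => ⟪b, z⟫) (InnerProductSpace.toDual ℝ E b) z := by
      have := (InnerProductSpace.toDual ℝ E b).hasFDerivAt (x := z)
      apply this.congr_of_eventuallyEq
      filter_upwards with z
      simp [InnerProductSpace.toDual_apply_apply]
    rw [hasGradientAt_iff_hasFDerivAt]
    have := hL.sub hbF
    rwa [← map_sub (InnerProductSpace.toDual ℝ E)] at this
  have hφgrad : ∀ z : E, gradient φ z = gradient L z - b := fun z => (hφgradAt z).gradient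
  have hφdiff : Differentiable ℝ φ := fun z => ((hφgradAt z).differentiableAt)
  have hφconv : ConvexOn ℝ Set.univ φ := by
    refine hconv.sub ⟨convex_univ, ?_⟩
    intro p _ q _ a c ha hc hac
    rw [inner_add_right, real_inner_smul_right, real_inner_smul_right]
    simp [smul_eq_mul]
  have hφlip : ∀ u v : E, ‖gradient φ u - gradient φ v‖ ≤ K * ‖u - v‖ := by
    intro z1 z2
    rw [hφgrad, hφgrad]
    have : gradient L z1 - b - (gradient L z2 - b) = gradient L z1 - gradient L z2 := by abel
    rw [this]
    exact hlip z1 z2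
  have hφu : gradient φ u = 0 := by rw [hφgrad]; simp [hb]
  have hB := aux_min_le φ hφconv hφdiff K hK hφlip u hφu wstar
  rw [hφgrad, hstar, zero_sub, norm_neg] at hB
  simp only [hφ] at hB
  -- hB : L u - ⟪b, u⟫ + ‖b‖^2/(2K) ≤ L wstar - ⟪b, wstar⟫
  -- hA : L wstar + ‖b‖^2/(2K) ≤ L u
  have hsum : ‖b‖ ^ 2 / (2 * K) + ‖b‖ ^ 2 / (2 * K) ≤ ⟪b, u⟫ - ⟪b, wstar⟫ := by linarith
  have hdiv : ‖b‖ ^ 2 / K ≤ ⟪b, u⟫ - ⟪b, wstar⟫ := by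
    have : ‖b‖ ^ 2 / (2 * K) + ‖b‖ ^ 2 / (2 * K) = ‖b‖ ^ 2 / K := by
      field_simp
      ring
    linarith
  have hinner : ⟪b, u⟫ - ⟪b, wstar⟫ = ⟪b, u - wstar⟫ := (inner_sub_right _ _ _).symm
  rw [hinner] at hdiv
  calc ‖b‖ ^ 2 = K * (‖b‖ ^ 2 / K) := by field_simp
    _ ≤ K * ⟪b, u - wstar⟫ := by
        exact mul_le_mul_of_nonneg_left hdiv hK.le

end AuxAnalysis

section AuxProb

variable {Ω : Type*} {m m0 : MeasurableSpace Ω} {μ : Measure Ω}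
variable {E : Type*} [NormedAddCommGroup E] [InnerProductSpace ℝ E] [CompleteSpace E]

lemma aux_integrable_inner (f g : Ω → E) (hf : MemLp f 2 μ) (hg : MemLp g 2 μ) :
    Integrable (fun ω => ⟪f ω, g ω⟫) μ := by
  have h := L2.integrable_inner (𝕜 := ℝ) (hf.toLp f) (hg.toLp g)
  refine h.congr ?_
  filter_upwards [hf.coeFn_toLp, hg.coeFn_toLp] with ω h1 h2
  rw [h1, h2]

lemma aux_integrable_normsq (f : Ω → E) (hf : MemLp f 2 μ) :
    Integrable (fun ω => ‖f ω‖ ^ 2) μ := by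
  have := aux_integrable_inner f f hf hf
  simpa [real_inner_self_eq_norm_sq] using this

lemma aux_cauchy_schwarz [IsProbabilityMeasure μ] (f : Ω → E) (hf : MemLp f 2 μ) :
    (∫ ω, ‖f ω‖ ∂μ) ^ 2 ≤ ∫ ω, ‖f ω‖ ^ 2 ∂μ := by
  set m := ∫ ω, ‖f ω‖ ∂μ with hm
  have hint1 : Integrable (fun ω => ‖f ω‖) μ := (hf.integrable one_le_two).norm
  have hint2 : Integrable (fun ω => ‖f ω‖ ^ 2) μ := aux_integrable_normsq f hf
  have h0 : 0 ≤ ∫ ω, (‖f ω‖ - m) ^ 2 ∂μ := integral_nonneg fun ω => sq_nonneg _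
  have heq : ∫ ω, (‖f ω‖ - m) ^ 2 ∂μ = (∫ ω, ‖f ω‖ ^ 2 ∂μ) - m ^ 2 := by
    have hptwise : (fun ω => (‖f ω‖ - m) ^ 2)
        = fun ω => ‖f ω‖ ^ 2 - (2 * m) * ‖f ω‖ + m ^ 2 := by
      funext ω; ring
    have hint3 : Integrable (fun ω => ‖f ω‖ ^ 2 - 2 * m * ‖f ω‖) μ :=
      hint2.sub (hint1.const_mul _)
    have hint4 : Integrable (fun ω => 2 * m * ‖f ω‖) μ := hint1.const_mul _
    rw [hptwise, integral_add hint3 (integrable_const _),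
      integral_sub hint2 hint4, integral_const_mul, integral_const]
    simp [← hm]
    ring
  linarith [heq ▸ h0]

lemma aux_condexp_clm [IsProbabilityMeasure μ] (hm : m ≤ m0)
    (A : E →L[ℝ] ℝ) {f : Ω → E} (hf : Integrable f μ) :
    (fun ω => A ((μ[f|m]) ω)) =ᵐ[μ] μ[fun ω => A (f ω)|m] := by
  haveI : SigmaFinite (μ.trim hm) := by
    have : IsFiniteMeasure (μ.trim hm) := isFiniteMeasure_trim hm
    infer_instance
  refine ae_eq_condExp_of_forall_setIntegral_eq hm (A.integrable_comp hf) ?_ ?_ ?_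
  · intro s _ _
    exact (A.integrable_comp integrable_condExp).integrableOn
  · intro s hs hμs
    rw [A.integral_comp_comm integrable_condExp.integrableOn,
      A.integral_comp_comm hf.integrableOn, setIntegral_condExp hm hf hs]
  · exact (A.continuous.comp_stronglyMeasurable stronglyMeasurable_condExp).aestronglyMeasurable

lemma aux_coord_le_norm {n : ℕ} (x : EuclideanSpace ℝ (Fin n)) (i : Fin n) :
    ‖x i‖ ≤ ‖x‖ := by
  rw [EuclideanSpace.norm_eq, Real.norm_eq_abs]
  rw [show |x i| = Real.sqrt (|x i| ^ 2) from (Real.sqrt_sq (abs_nonneg _)).symm]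
  apply Real.sqrt_le_sqrt
  rw [sq_abs]
  have : x i ^ 2 = ‖x i‖ ^ 2 := by rw [Real.norm_eq_abs, sq_abs]
  rw [this]
  exact Finset.single_le_sum (f := fun j => ‖x j‖ ^ 2) (fun j _ => sq_nonneg _)
    (Finset.mem_univ i)

lemma aux_integral_inner_condexp {n : ℕ} [IsProbabilityMeasure μ]
    (hm : m ≤ m0) (F gg : Ω → EuclideanSpace ℝ (Fin n))
    (hF : StronglyMeasurable[m] F) (C : ℝ) (hFb : ∀ᵐ ω ∂μ, ‖F ω‖ ≤ C)
    (hgg : Integrable gg μ) :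
    ∫ ω, ⟪F ω, gg ω⟫ ∂μ = ∫ ω, ⟪F ω, (μ[gg|m]) ω⟫ ∂μ := by
  haveI : SigmaFinite (μ.trim hm) := by
    have : IsFiniteMeasure (μ.trim hm) := isFiniteMeasure_trim hm
    infer_instance
  have hFi : ∀ i, StronglyMeasurable[m] fun ω => F ω i := fun i =>
    (EuclideanSpace.proj (𝕜 := ℝ) i).continuous.comp_stronglyMeasurable hF
  have hFib : ∀ i : Fin n, ∀ᵐ ω ∂μ, ‖F ω i‖ ≤ C := fun i => by
    filter_upwards [hFb] with ω h
    exact (aux_coord_le_norm (F ω) i).trans h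
  have hFmeas : ∀ i : Fin n, AEStronglyMeasurable (fun ω => F ω i) μ := fun i =>
    ((hFi i).mono hm).aestronglyMeasurable
  have hggi : ∀ i : Fin n, Integrable (fun ω => gg ω i) μ := fun i =>
    (EuclideanSpace.proj (𝕜 := ℝ) i).integrable_comp hgg
  have hci : ∀ i : Fin n, Integrable (fun ω => (μ[gg|m]) ω i) μ := fun i =>
    (EuclideanSpace.proj (𝕜 := ℝ) i).integrable_comp integrable_condExp
  have hinner : ∀ (h : Ω → EuclideanSpace ℝ (Fin n)) (ω : Ω),
      ⟪F ω, h ω⟫ = ∑ i : Fin n, F ω i * h ω i := by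
    intro h ω
    rw [PiLp.inner_apply]
    simp [RCLike.inner_apply, mul_comm]
  calc ∫ ω, ⟪F ω, gg ω⟫ ∂μ = ∫ ω, ∑ i : Fin n, F ω i * gg ω i ∂μ := by
        simp_rw [hinner]
    _ = ∑ i : Fin n, ∫ ω, F ω i * gg ω i ∂μ :=
        integral_finset_sum _ fun i _ => (hggi i).bdd_mul (hFmeas i) (hFib i)
    _ = ∑ i : Fin n, ∫ ω, F ω i * (μ[gg|m]) ω i ∂μ := by
        refine Finset.sum_congr rfl fun i _ => ?_
        have h1 : μ[(fun ω => F ω i) * fun ω => gg ω i|m]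
            =ᵐ[μ] (fun ω => F ω i) * μ[fun ω => gg ω i|m] :=
          condExp_stronglyMeasurable_mul_of_bound hm (hFi i) (hggi i) C (hFib i)
        have h2 : μ[fun ω => gg ω i|m] =ᵐ[μ] fun ω => (μ[gg|m]) ω i := by
          have := aux_condexp_clm hm (EuclideanSpace.proj (𝕜 := ℝ) i) hgg
          exact this.symm
        calc ∫ ω, F ω i * gg ω i ∂μ
            = ∫ ω, (μ[(fun ω => F ω i) * fun ω => gg ω i|m]) ω ∂μ :=
              (integral_condExp hm).symm
          _ = ∫ ω, F ω i * (μ[gg|m]) ω i ∂μ := by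
              refine integral_congr_ae ?_
              filter_upwards [h1, h2] with ω hω1 hω2
              rw [hω1]
              simp only [Pi.mul_apply]
              rw [hω2]
    _ = ∫ ω, ∑ i : Fin n, F ω i * (μ[gg|m]) ω i ∂μ :=
        (integral_finset_sum _ fun i _ => (hci i).bdd_mul (hFmeas i) (hFib i)).symm
    _ = ∫ ω, ⟪F ω, (μ[gg|m]) ω⟫ ∂μ := by
        simp_rw [hinner]

end AuxProb

set_option maxHeartbeats 4000000 in
theorem stmt_9 (p : ℕ) (K : ℝ) (hK : 0 < K)
    (L : EuclideanSpace ℝ (Fin p) → ℝ)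
    (hconv : ConvexOn ℝ Set.univ L)
    (hdiff : Differentiable ℝ L)
    (hlip : ∀ u v : EuclideanSpace ℝ (Fin p),
      ‖gradient L u - gradient L v‖ ≤ K * ‖u - v‖)
    (wstar : EuclideanSpace ℝ (Fin p)) (hstar : gradient L wstar = 0)
    (G Dw : ℝ) (hG : 0 ≤ G) (hDw : 0 ≤ Dw)
    (hGbound : ∀ w : EuclideanSpace ℝ (Fin p), ‖gradient L w‖ ≤ G)
    {Ω : Type*} [MeasurableSpace Ω] (μ : Measure Ω) [IsProbabilityMeasure μ]
    (T : ℕ) (hT : 0 < T)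
    (w g Δ : Fin T → Ω → EuclideanSpace ℝ (Fin p))
    (η : ℝ)
    (hw2 : ∀ t, MemLp (w t) 2 μ) (hg2 : ∀ t, MemLp (g t) 2 μ)
    (hΔ2 : ∀ t, MemLp (Δ t) 2 μ)
    (hupdate : ∀ t : Fin T, ∀ h : (t : ℕ) + 1 < T,
      ∀ᵐ ω ∂μ, w ⟨(t : ℕ) + 1, h⟩ ω = w t ω - η • Δ t ω)
    (𝒢 : Fin T → MeasurableSpace Ω) (h𝒢 : ∀ t, 𝒢 t ≤ ‹MeasurableSpace Ω›)
    (hwmeas : ∀ t, StronglyMeasurable[𝒢 t] (w t))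
    (hΔmeas : ∀ t, Measurable (Δ t)) (hgmeas : ∀ t, Measurable (g t))
    (hunbiased : ∀ t, μ[g t | 𝒢 t] =ᵐ[μ] fun ω => gradient L (w t ω))
    (hball : ∀ t, ∀ᵐ ω ∂μ, ‖w t ω - wstar‖ ≤ Dw)
    (σ B : ℝ) (hσ : 0 < σ) (hB : 0 ≤ B)
    (hσbound : ∀ t, 2 * ∫ ω, ‖g t ω - gradient L (w t ω)‖ ^ 2 ∂μ
        + 2 * ∫ ω, ‖g t ω - Δ t ω‖ ^ 2 ∂μ ≤ σ ^ 2)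
    (hBbound : ∀ t, 2 * ∫ ω, ‖g t ω - Δ t ω‖ ^ 2 ∂μ ≤ B ^ 2)
    (hη : η = min (1 / K) (Dw / (σ * Real.sqrt T))) :
    ∫ ω, (1 / (T : ℝ)) * ∑ t : Fin T, (L (w t ω) - L wstar) ∂μ ≤
      Dw ^ 2 * K / T + Dw * σ / Real.sqrt T
        + 2 * B * Dw * (1 + G / (σ * Real.sqrt T)) := by
  have hT' : (0:ℝ) < T := by exact_mod_cast hT
  have hsqT : 0 < Real.sqrt T := Real.sqrt_pos.mpr hT'
  have hs : 0 < σ * Real.sqrt T := mul_pos hσ hsqT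
  -- convexity facts
  have hLmin : ∀ z, L wstar ≤ L z := by
    intro z
    have := aux_convex_grad L hconv hdiff wstar z
    rw [hstar] at this
    simpa using this
  have hXle : ∀ z : EuclideanSpace ℝ (Fin p),
      L z - L wstar ≤ ⟪z - wstar, gradient L z⟫ := by
    intro z
    have h := aux_convex_grad L hconv hdiff z wstar
    have h2 : ⟪gradient L z, wstar - z⟫ = - ⟪z - wstar, gradient L z⟫ := by
      rw [real_inner_comm, show wstar - z = -(z - wstar) by abel, inner_neg_left]
    rw [h2] at h
    linarith
  have hcoco : ∀ z, ‖gradient L z‖ ^ 2 ≤ K * ⟪z - wstar, gradient L z⟫ := by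
    intro z
    have := aux_cocoercive L hconv hdiff K hK hlip wstar hstar z
    rwa [real_inner_comm] at this
  -- measurability
  have hgradcont : Continuous (gradient L) := by
    have : LipschitzWith (Real.toNNReal K) (gradient L) := by
      apply LipschitzWith.of_dist_le_mul
      intro u v
      rw [dist_eq_norm, dist_eq_norm, Real.coe_toNNReal _ hK.le]
      exact hlip u v
    exact this.continuous
  have hwm : ∀ t, StronglyMeasurable (w t) := fun t => (hwmeas t).mono (h𝒢 t)
  have hXmeas : ∀ t, AEStronglyMeasurable (fun ω => L (w t ω) - L wstar) μ := fun t =>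
    (((hdiff.continuous).comp_stronglyMeasurable (hwm t)).sub
      stronglyMeasurable_const).aestronglyMeasurable
  have hXint : ∀ t, Integrable (fun ω => L (w t ω) - L wstar) μ := by
    intro t
    refine Integrable.mono' (integrable_const (G * Dw)) (hXmeas t) ?_
    filter_upwards [hball t] with ω hω
    rw [Real.norm_eq_abs, abs_le]
    constructor
    · have h9 := hLmin (w t ω)
      nlinarith [mul_nonneg hG hDw]
    · calc L (w t ω) - L wstar ≤ ⟪w t ω - wstar, gradient L (w t ω)⟫ := hXle _
        _ ≤ ‖w t ω - wstar‖ * ‖gradient L (w t ω)‖ := real_inner_le_norm _ _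
        _ ≤ Dw * G := mul_le_mul hω (hGbound _) (norm_nonneg _) hDw
        _ = G * Dw := mul_comm _ _
  have hLHS : ∫ ω, (1 / (T:ℝ)) * ∑ t : Fin T, (L (w t ω) - L wstar) ∂μ
      = (1 / (T:ℝ)) * ∑ t : Fin T, ∫ ω, (L (w t ω) - L wstar) ∂μ := by
    rw [integral_const_mul, integral_finset_sum _ fun t _ => hXint t]
  rw [hLHS]
  by_cases hDw0 : Dw = 0
  · subst hDw0
    have hz : ∀ t : Fin T, ∫ ω, (L (w t ω) - L wstar) ∂μ = 0 := by
      intro t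
      have : (fun ω => L (w t ω) - L wstar) =ᵐ[μ] fun _ => (0:ℝ) := by
        filter_upwards [hball t] with ω hω
        have h0 : w t ω - wstar = 0 := by
          have := norm_nonneg (w t ω - wstar)
          have : ‖w t ω - wstar‖ = 0 := le_antisymm hω (norm_nonneg _)
          exact norm_eq_zero.mp this
        have : w t ω = wstar := by
          have := sub_eq_zero.mp h0; exact this
        rw [this, sub_self]
      rw [integral_congr_ae this, integral_zero]
    simp only [hz, Finset.sum_const_zero, mul_zero]
    positivity
  have hDwpos : 0 < Dw := lt_of_le_of_ne hDw (Ne.symm hDw0)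
  have hηpos : 0 < η := by
    rw [hη]; exact lt_min (by positivity) (by positivity)
  have hη1 : η ≤ 1 / K := hη ▸ min_le_left _ _
  have hη2 : η ≤ Dw / (σ * Real.sqrt T) := hη ▸ min_le_right _ _
  have hηK : η * K ≤ 1 := by
    rw [le_div_iff₀ hK] at hη1; linarith
  have hηs : η * (σ * Real.sqrt T) ≤ Dw := by
    rw [le_div_iff₀ hs] at hη2; linarith
  -- MemLp facts
  have hd2 : ∀ t, MemLp (fun ω => w t ω - wstar) 2 μ := fun t => (hw2 t).sub (memLp_const _)
  have hc2 : ∀ t, MemLp (fun ω => gradient L (w t ω)) 2 μ := fun t =>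
    MemLp.of_bound ((hgradcont.comp_stronglyMeasurable (hwm t)).aestronglyMeasurable) G
      (Eventually.of_forall fun ω => hGbound _)
  have ha2 : ∀ t, MemLp (fun ω => g t ω - Δ t ω) 2 μ := fun t => (hg2 t).sub (hΔ2 t)
  -- per-step inequality
  have step : ∀ t : Fin T,
      (2*η - η^2*K) * (∫ ω, (L (w t ω) - L wstar) ∂μ)
        ≤ (∫ ω, ‖w t ω - wstar‖^2 ∂μ)
          - (∫ ω, ‖(w t ω - wstar) - η • Δ t ω‖^2 ∂μ)
          + (2*η*Dw*B + 2*η^2*G*B + η^2*σ^2) := by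
    intro t
    have Id2 : Integrable (fun ω => ‖w t ω - wstar‖^2) μ := aux_integrable_normsq _ (hd2 t)
    have IdΔ : Integrable (fun ω => ⟪w t ω - wstar, Δ t ω⟫) μ :=
      aux_integrable_inner _ _ (hd2 t) (hΔ2 t)
    have IΔ2 : Integrable (fun ω => ‖Δ t ω‖^2) μ := aux_integrable_normsq _ (hΔ2 t)
    have Idg : Integrable (fun ω => ⟪w t ω - wstar, g t ω⟫) μ :=
      aux_integrable_inner _ _ (hd2 t) (hg2 t)
    have Ida : Integrable (fun ω => ⟪w t ω - wstar, g t ω - Δ t ω⟫) μ :=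
      aux_integrable_inner _ _ (hd2 t) (ha2 t)
    have Idc : Integrable (fun ω => ⟪w t ω - wstar, gradient L (w t ω)⟫) μ :=
      aux_integrable_inner _ _ (hd2 t) (hc2 t)
    have Icg : Integrable (fun ω => ⟪gradient L (w t ω), g t ω⟫) μ :=
      aux_integrable_inner _ _ (hc2 t) (hg2 t)
    have Ica : Integrable (fun ω => ⟪gradient L (w t ω), g t ω - Δ t ω⟫) μ :=
      aux_integrable_inner _ _ (hc2 t) (ha2 t)
    have Ic2 : Integrable (fun ω => ‖gradient L (w t ω)‖^2) μ := aux_integrable_normsq _ (hc2 t)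
    have Ie2 : Integrable (fun ω => ‖Δ t ω - gradient L (w t ω)‖^2) μ :=
      aux_integrable_normsq _ ((hΔ2 t).sub (hc2 t))
    have Ice : Integrable (fun ω => ⟪gradient L (w t ω), Δ t ω - gradient L (w t ω)⟫) μ :=
      aux_integrable_inner _ _ (hc2 t) ((hΔ2 t).sub (hc2 t))
    have Ia2 : Integrable (fun ω => ‖g t ω - Δ t ω‖^2) μ := aux_integrable_normsq _ (ha2 t)
    have Ib2 : Integrable (fun ω => ‖g t ω - gradient L (w t ω)‖^2) μ :=
      aux_integrable_normsq _ ((hg2 t).sub (hc2 t))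
    have Ian : Integrable (fun ω => ‖g t ω - Δ t ω‖) μ := ((ha2 t).integrable one_le_two).norm
    have hdm : StronglyMeasurable[𝒢 t] (fun ω => w t ω - wstar) :=
      (hwmeas t).sub stronglyMeasurable_const
    have hcm : StronglyMeasurable[𝒢 t] (fun ω => gradient L (w t ω)) :=
      hgradcont.comp_stronglyMeasurable (hwmeas t)
    have hdg : ∫ ω, ⟪w t ω - wstar, g t ω⟫ ∂μ
        = ∫ ω, ⟪w t ω - wstar, gradient L (w t ω)⟫ ∂μ := by
      have h1 := aux_integral_inner_condexp (h𝒢 t) (fun ω => w t ω - wstar) (g t) hdm Dw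
        (hball t) ((hg2 t).integrable one_le_two)
      refine h1.trans (integral_congr_ae ?_)
      filter_upwards [hunbiased t] with ω hω
      simp only [hω]
    have hcg : ∫ ω, ⟪gradient L (w t ω), g t ω⟫ ∂μ
        = ∫ ω, ‖gradient L (w t ω)‖^2 ∂μ := by
      have h1 := aux_integral_inner_condexp (h𝒢 t) (fun ω => gradient L (w t ω)) (g t) hcm G
        (Eventually.of_forall fun ω => hGbound _) ((hg2 t).integrable one_le_two)
      refine h1.trans (integral_congr_ae ?_)
      filter_upwards [hunbiased t] with ω hω
      simp only [hω, real_inner_self_eq_norm_sq]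
    have hdΔ : ∫ ω, ⟪w t ω - wstar, Δ t ω⟫ ∂μ
        = (∫ ω, ⟪w t ω - wstar, gradient L (w t ω)⟫ ∂μ)
          - ∫ ω, ⟪w t ω - wstar, g t ω - Δ t ω⟫ ∂μ := by
      rw [← hdg, ← integral_sub Idg Ida]
      refine integral_congr_ae (Eventually.of_forall fun ω => ?_)
      simp only [inner_sub_right]
      ring
    have hce : ∫ ω, ⟪gradient L (w t ω), Δ t ω - gradient L (w t ω)⟫ ∂μ
        = - ∫ ω, ⟪gradient L (w t ω), g t ω - Δ t ω⟫ ∂μ := by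
      have hpt : ∀ ω, ⟪gradient L (w t ω), Δ t ω - gradient L (w t ω)⟫
          = ⟪gradient L (w t ω), g t ω⟫ - ‖gradient L (w t ω)‖^2
            - ⟪gradient L (w t ω), g t ω - Δ t ω⟫ := by
        intro ω
        simp only [inner_sub_right, real_inner_self_eq_norm_sq]
        ring
      calc ∫ ω, ⟪gradient L (w t ω), Δ t ω - gradient L (w t ω)⟫ ∂μ
          = ∫ ω, (⟪gradient L (w t ω), g t ω⟫ - ‖gradient L (w t ω)‖^2
              - ⟪gradient L (w t ω), g t ω - Δ t ω⟫) ∂μ :=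
            integral_congr_ae (Eventually.of_forall hpt)
        _ = (∫ ω, ⟪gradient L (w t ω), g t ω⟫ ∂μ) - (∫ ω, ‖gradient L (w t ω)‖^2 ∂μ)
              - ∫ ω, ⟪gradient L (w t ω), g t ω - Δ t ω⟫ ∂μ := by
            have Icg2 : Integrable (fun ω => ⟪gradient L (w t ω), g t ω⟫
                - ‖gradient L (w t ω)‖^2) μ := Icg.sub Ic2
            rw [integral_sub Icg2 Ica, integral_sub Icg Ic2]
        _ = - ∫ ω, ⟪gradient L (w t ω), g t ω - Δ t ω⟫ ∂μ := by
            rw [hcg]; ring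
    have hv : ∫ ω, ‖(w t ω - wstar) - η • Δ t ω‖^2 ∂μ
        = (∫ ω, ‖w t ω - wstar‖^2 ∂μ) - 2*η*(∫ ω, ⟪w t ω - wstar, Δ t ω⟫ ∂μ)
          + η^2*(∫ ω, ‖Δ t ω‖^2 ∂μ) := by
      calc ∫ ω, ‖(w t ω - wstar) - η • Δ t ω‖^2 ∂μ
          = ∫ ω, (‖w t ω - wstar‖^2 - 2*η*⟪w t ω - wstar, Δ t ω⟫ + η^2*‖Δ t ω‖^2) ∂μ := by
            refine integral_congr_ae (Eventually.of_forall fun ω => ?_)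
            dsimp only
            rw [norm_sub_sq_real, real_inner_smul_right, norm_smul, Real.norm_eq_abs, mul_pow,
              sq_abs]
            ring
        _ = _ := by
            have h1 : Integrable
                (fun ω => ‖w t ω - wstar‖^2 - 2*η*⟪w t ω - wstar, Δ t ω⟫) μ :=
              Id2.sub (IdΔ.const_mul _)
            have h2 : Integrable (fun ω => 2*η*⟪w t ω - wstar, Δ t ω⟫) μ := IdΔ.const_mul _
            have h3 : Integrable (fun ω => η^2*‖Δ t ω‖^2) μ := IΔ2.const_mul _
            rw [integral_add h1 h3, integral_sub Id2 h2, integral_const_mul, integral_const_mul]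
    have hΔexp : ∫ ω, ‖Δ t ω‖^2 ∂μ
        = (∫ ω, ‖gradient L (w t ω)‖^2 ∂μ)
          + 2*(∫ ω, ⟪gradient L (w t ω), Δ t ω - gradient L (w t ω)⟫ ∂μ)
          + ∫ ω, ‖Δ t ω - gradient L (w t ω)‖^2 ∂μ := by
      calc ∫ ω, ‖Δ t ω‖^2 ∂μ
          = ∫ ω, (‖gradient L (w t ω)‖^2
              + 2*⟪gradient L (w t ω), Δ t ω - gradient L (w t ω)⟫
              + ‖Δ t ω - gradient L (w t ω)‖^2) ∂μ := by
            refine integral_congr_ae (Eventually.of_forall fun ω => ?_)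
            dsimp only
            have h5 := norm_add_sq_real (gradient L (w t ω)) (Δ t ω - gradient L (w t ω))
            rw [show gradient L (w t ω) + (Δ t ω - gradient L (w t ω)) = Δ t ω by abel] at h5
            exact h5
        _ = _ := by
            have h1 : Integrable (fun ω => ‖gradient L (w t ω)‖^2
                + 2*⟪gradient L (w t ω), Δ t ω - gradient L (w t ω)⟫) μ :=
              Ic2.add (Ice.const_mul _)
            have h2 : Integrable
                (fun ω => 2*⟪gradient L (w t ω), Δ t ω - gradient L (w t ω)⟫) μ :=
              Ice.const_mul _
            rw [integral_add h1 Ie2, integral_add Ic2 h2, integral_const_mul]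
    have ha_bound : ∫ ω, ‖g t ω - Δ t ω‖ ∂μ ≤ B := by
      have h1 : (∫ ω, ‖g t ω - Δ t ω‖ ∂μ)^2 ≤ ∫ ω, ‖g t ω - Δ t ω‖^2 ∂μ :=
        aux_cauchy_schwarz _ (ha2 t)
      have h2 := hBbound t
      have h3 : 0 ≤ ∫ ω, ‖g t ω - Δ t ω‖ ∂μ := integral_nonneg fun ω => norm_nonneg _
      have h4 : 0 ≤ ∫ ω, ‖g t ω - Δ t ω‖^2 ∂μ := integral_nonneg fun ω => sq_nonneg _
      nlinarith
    have he2_bound : ∫ ω, ‖Δ t ω - gradient L (w t ω)‖^2 ∂μ ≤ σ^2 := by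
      have hpt : ∀ ω, ‖Δ t ω - gradient L (w t ω)‖^2
          ≤ 2*‖g t ω - gradient L (w t ω)‖^2 + 2*‖g t ω - Δ t ω‖^2 := by
        intro ω
        have h1 : Δ t ω - gradient L (w t ω)
            = (g t ω - gradient L (w t ω)) - (g t ω - Δ t ω) := by abel
        rw [h1]
        have h2 := norm_sub_le (g t ω - gradient L (w t ω)) (g t ω - Δ t ω)
        nlinarith [norm_nonneg (g t ω - gradient L (w t ω)), norm_nonneg (g t ω - Δ t ω),
          norm_nonneg ((g t ω - gradient L (w t ω)) - (g t ω - Δ t ω)),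
          sq_nonneg (‖g t ω - gradient L (w t ω)‖ - ‖g t ω - Δ t ω‖)]
      have hint : Integrable
          (fun ω => 2*‖g t ω - gradient L (w t ω)‖^2 + 2*‖g t ω - Δ t ω‖^2) μ :=
        (Ib2.const_mul 2).add (Ia2.const_mul 2)
      have h4 := integral_mono Ie2 hint hpt
      rw [integral_add (Ib2.const_mul 2) (Ia2.const_mul 2), integral_const_mul,
        integral_const_mul] at h4
      linarith [hσbound t]
    have hc2_bound : ∫ ω, ‖gradient L (w t ω)‖^2 ∂μ
        ≤ K * ∫ ω, ⟪w t ω - wstar, gradient L (w t ω)⟫ ∂μ := by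
      have h4 := integral_mono Ic2 (Idc.const_mul K) fun ω => hcoco (w t ω)
      rwa [integral_const_mul] at h4
    have hda_bound : ∫ ω, ⟪w t ω - wstar, g t ω - Δ t ω⟫ ∂μ
        ≤ Dw * ∫ ω, ‖g t ω - Δ t ω‖ ∂μ := by
      have h4 : ∫ ω, ⟪w t ω - wstar, g t ω - Δ t ω⟫ ∂μ
          ≤ ∫ ω, Dw * ‖g t ω - Δ t ω‖ ∂μ := by
        refine integral_mono_ae Ida (Ian.const_mul Dw) ?_
        filter_upwards [hball t] with ω hω
        calc ⟪w t ω - wstar, g t ω - Δ t ω⟫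
            ≤ ‖w t ω - wstar‖ * ‖g t ω - Δ t ω‖ := real_inner_le_norm _ _
          _ ≤ Dw * ‖g t ω - Δ t ω‖ := mul_le_mul_of_nonneg_right hω (norm_nonneg _)
      rwa [integral_const_mul] at h4
    have hca_bound : -(∫ ω, ⟪gradient L (w t ω), g t ω - Δ t ω⟫ ∂μ)
        ≤ G * ∫ ω, ‖g t ω - Δ t ω‖ ∂μ := by
      have hIca' : Integrable (fun ω => -⟪gradient L (w t ω), g t ω - Δ t ω⟫) μ := Ica.neg
      have h4 : ∫ ω, -⟪gradient L (w t ω), g t ω - Δ t ω⟫ ∂μ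
          ≤ ∫ ω, G * ‖g t ω - Δ t ω‖ ∂μ := by
        refine integral_mono hIca' (Ian.const_mul G) fun ω => ?_
        have h5 := real_inner_le_norm (gradient L (w t ω)) (-(g t ω - Δ t ω))
        rw [inner_neg_right, norm_neg] at h5
        calc -⟪gradient L (w t ω), g t ω - Δ t ω⟫
            ≤ ‖gradient L (w t ω)‖ * ‖g t ω - Δ t ω‖ := h5
          _ ≤ G * ‖g t ω - Δ t ω‖ := mul_le_mul_of_nonneg_right (hGbound _) (norm_nonneg _)
      rw [integral_neg, integral_const_mul] at h4
      linarith
    have hX_le_P : ∫ ω, (L (w t ω) - L wstar) ∂μ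
        ≤ ∫ ω, ⟪w t ω - wstar, gradient L (w t ω)⟫ ∂μ :=
      integral_mono (hXint t) Idc fun ω => hXle (w t ω)
    have hcoefnn : 0 ≤ 2*η - η^2*K := by nlinarith [hηpos.le, hηK]
    have p1 : η^2 * (∫ ω, ‖gradient L (w t ω)‖^2 ∂μ)
        ≤ η^2 * (K * ∫ ω, ⟪w t ω - wstar, gradient L (w t ω)⟫ ∂μ) :=
      mul_le_mul_of_nonneg_left hc2_bound (sq_nonneg η)
    have p2 : (2*η - η^2*K) * (∫ ω, (L (w t ω) - L wstar) ∂μ)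
        ≤ (2*η - η^2*K) * (∫ ω, ⟪w t ω - wstar, gradient L (w t ω)⟫ ∂μ) :=
      mul_le_mul_of_nonneg_left hX_le_P hcoefnn
    have p3 : 2*η*(∫ ω, ⟪w t ω - wstar, g t ω - Δ t ω⟫ ∂μ) ≤ 2*η*(Dw*B) := by
      refine mul_le_mul_of_nonneg_left ?_ (by positivity)
      exact hda_bound.trans (mul_le_mul_of_nonneg_left ha_bound hDw)
    have p4 : 2*η^2*(-(∫ ω, ⟪gradient L (w t ω), g t ω - Δ t ω⟫ ∂μ)) ≤ 2*η^2*(G*B) := by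
      refine mul_le_mul_of_nonneg_left ?_ (by positivity)
      exact hca_bound.trans (mul_le_mul_of_nonneg_left ha_bound hG)
    have p5 : η^2*(∫ ω, ‖Δ t ω - gradient L (w t ω)‖^2 ∂μ) ≤ η^2*σ^2 :=
      mul_le_mul_of_nonneg_left he2_bound (sq_nonneg η)
    rw [hdΔ, hΔexp, hce] at hv
    nlinarith [hv, p1, p2, p3, p4, p5]
  -- telescoping
  have hTm : T - 1 < T := Nat.sub_lt hT Nat.one_pos
  obtain ⟨F, hF⟩ : ∃ F : ℕ → ℝ, F = fun n =>
      if h : n < T then ∫ ω, ‖w ⟨n, h⟩ ω - wstar‖^2 ∂μ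
      else ∫ ω, ‖(w ⟨T-1, hTm⟩ ω - wstar) - η • Δ ⟨T-1, hTm⟩ ω‖^2 ∂μ := ⟨_, rfl⟩
  have hFt : ∀ t : Fin T, F (t:ℕ) = ∫ ω, ‖w t ω - wstar‖^2 ∂μ := by
    intro t
    rw [hF]
    simp only [t.isLt, dif_pos, Fin.eta]
  have hFt1 : ∀ t : Fin T, F ((t:ℕ)+1) = ∫ ω, ‖(w t ω - wstar) - η • Δ t ω‖^2 ∂μ := by
    intro t
    by_cases h1 : (t:ℕ)+1 < T
    · rw [hF]
      simp only [h1, dif_pos]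
      refine integral_congr_ae ?_
      filter_upwards [hupdate t h1] with ω hω
      rw [hω, sub_right_comm]
    · have ht' : t = ⟨T-1, hTm⟩ := by
        apply Fin.ext
        simp only []
        omega
      rw [hF]
      simp only [h1, dif_neg, not_false_iff]
      rw [ht']
  have hstep2 : ∀ t : Fin T, (2*η - η^2*K) * (∫ ω, (L (w t ω) - L wstar) ∂μ)
      ≤ F (t:ℕ) - F ((t:ℕ)+1) + (2*η*Dw*B + 2*η^2*G*B + η^2*σ^2) := by
    intro t
    rw [hFt t, hFt1 t]
    linarith [step t]
  have htel : ∑ t : Fin T, (F (t:ℕ) - F ((t:ℕ)+1)) = F 0 - F T := by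
    rw [Fin.sum_univ_eq_sum_range (fun n => F n - F (n+1)) T]
    exact Finset.sum_range_sub' F T
  have hF0 : F 0 ≤ Dw^2 := by
    rw [hF]
    simp only [hT, dif_pos]
    have hb1 : ∫ ω, ‖w ⟨0, hT⟩ ω - wstar‖^2 ∂μ ≤ ∫ _ω, Dw^2 ∂μ := by
      refine integral_mono_ae (aux_integrable_normsq _ (hd2 ⟨0, hT⟩))
        (integrable_const _) ?_
      filter_upwards [hball ⟨0, hT⟩] with ω hω
      exact pow_le_pow_left₀ (norm_nonneg _) hω 2
    simpa using hb1
  have hFT : 0 ≤ F T := by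
    rw [hF]
    simp only [lt_irrefl, dif_neg, not_false_iff]
    exact integral_nonneg fun ω => sq_nonneg _
  have hsum : (2*η - η^2*K) * (∑ t : Fin T, ∫ ω, (L (w t ω) - L wstar) ∂μ)
      ≤ Dw^2 + T * (2*η*Dw*B + 2*η^2*G*B + η^2*σ^2) := by
    have h1 : ∑ t : Fin T, ((2*η - η^2*K) * (∫ ω, (L (w t ω) - L wstar) ∂μ))
        ≤ ∑ t : Fin T, (F (t:ℕ) - F ((t:ℕ)+1) + (2*η*Dw*B + 2*η^2*G*B + η^2*σ^2)) :=
      Finset.sum_le_sum fun t _ => hstep2 t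
    rw [← Finset.mul_sum] at h1
    have h2 : ∑ t : Fin T, (F (t:ℕ) - F ((t:ℕ)+1) + (2*η*Dw*B + 2*η^2*G*B + η^2*σ^2))
        = (F 0 - F T) + T * (2*η*Dw*B + 2*η^2*G*B + η^2*σ^2) := by
      rw [Finset.sum_add_distrib, htel, Finset.sum_const, Finset.card_univ, Fintype.card_fin,
        nsmul_eq_mul]
    rw [h2] at h1
    linarith
  -- final arithmetic
  have hcoef : 0 < 2*η - η^2*K := by nlinarith [hηpos, hηK]
  have hs2 : (σ * Real.sqrt T)^2 = σ^2 * T := by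
    rw [mul_pow, Real.sq_sqrt hT'.le]
  have hclaim1 : Dw^2 + η^2*((σ * Real.sqrt T)^2)
      ≤ (2*η - η^2*K)*(Dw^2*K + Dw*(σ * Real.sqrt T)) := by
    rcases le_total (1/K) (Dw/(σ * Real.sqrt T)) with hc | hc
    · have hηeq : η = 1/K := by rw [hη]; exact min_eq_left hc
      have hηK1 : η*K = 1 := by rw [hηeq]; field_simp
      have e1 : η^2*K = η := by
        calc η^2*K = η*(η*K) := by ring
          _ = η := by rw [hηK1, mul_one]
      have e2 : η*(Dw^2*K) = Dw^2 := by
        calc η*(Dw^2*K) = Dw^2*(η*K) := by ring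
          _ = Dw^2 := by rw [hηK1, mul_one]
      have p := mul_le_mul_of_nonneg_left hηs (mul_nonneg hηpos.le hs.le)
      nlinarith [p, e1, e2]
    · have hηeq : η = Dw/(σ * Real.sqrt T) := by rw [hη]; exact min_eq_right hc
      have hDweq : Dw = η * (σ * Real.sqrt T) := by
        rw [hηeq]; field_simp
      have hηK0 : 0 ≤ η*K := mul_nonneg hηpos.le hK.le
      have hkey : 0 ≤ (η^2*(σ * Real.sqrt T)^2) * (η*K*(1 - η*K)) :=
        mul_nonneg (mul_nonneg (sq_nonneg η) (sq_nonneg _)) (mul_nonneg hηK0 (by linarith))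
      rw [hDweq]
      nlinarith [hkey]
  have hbr : 0 ≤ 2*B*Dw*T + 2*B*Dw*G*T/(σ * Real.sqrt T) := by positivity
  have hclaim2 : T*(2*η*Dw*B) + T*(2*η^2*G*B)
      ≤ (2*η - η^2*K)*(2*B*Dw*T + 2*B*Dw*G*T/(σ * Real.sqrt T)) := by
    have h2x : η ≤ 2*η - η^2*K := by nlinarith [hηpos.le, hηK]
    have hq : η^2*G ≤ η*(Dw*G/(σ * Real.sqrt T)) := by
      have := mul_le_mul_of_nonneg_right hη2 hG
      calc η^2*G = η*(η*G) := by ring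
        _ ≤ η*(Dw/(σ * Real.sqrt T)*G) := by
            refine mul_le_mul_of_nonneg_left ?_ hηpos.le
            exact this
        _ = η*(Dw*G/(σ * Real.sqrt T)) := by ring
    have f2 : 0 ≤ (2*η - η^2*K - η)*(2*B*Dw*T + 2*B*Dw*G*T/(σ * Real.sqrt T)) :=
      mul_nonneg (by linarith) hbr
    have f1 : (2*η - η^2*K)*(2*B*Dw*T + 2*B*Dw*G*T/(σ * Real.sqrt T))
        = η*(2*B*Dw*T) + η*(2*B*Dw*G*T/(σ * Real.sqrt T))
          + (2*η - η^2*K - η)*(2*B*Dw*T + 2*B*Dw*G*T/(σ * Real.sqrt T)) := by ring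
    have f3' : 2*B*(T:ℝ)*(η^2*G) ≤ 2*B*(T:ℝ)*(η*(Dw*G/(σ * Real.sqrt T))) :=
      mul_le_mul_of_nonneg_left hq (by positivity)
    have f3 : η*(2*B*Dw*G*(T:ℝ)/(σ * Real.sqrt T))
        = 2*B*(T:ℝ)*(η*(Dw*G/(σ * Real.sqrt T))) := by ring
    linarith [f1, f2, f3, f3']
  have htarget : Dw^2 + T * (2*η*Dw*B + 2*η^2*G*B + η^2*σ^2)
      ≤ (2*η - η^2*K) * (Dw^2*K + Dw*(σ * Real.sqrt T) + 2*B*Dw*T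
          + 2*B*Dw*G*T/(σ * Real.sqrt T)) := by
    have hTR : (T:ℝ)*(2*η*Dw*B + 2*η^2*G*B + η^2*σ^2)
        = T*(2*η*Dw*B) + T*(2*η^2*G*B) + η^2*((σ * Real.sqrt T)^2) := by
      rw [hs2]; ring
    have hexp : (2*η - η^2*K) * (Dw^2*K + Dw*(σ * Real.sqrt T) + 2*B*Dw*T
          + 2*B*Dw*G*T/(σ * Real.sqrt T))
        = (2*η - η^2*K)*(Dw^2*K + Dw*(σ * Real.sqrt T))
          + (2*η - η^2*K)*(2*B*Dw*T + 2*B*Dw*G*T/(σ * Real.sqrt T)) := by ring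
    linarith [hclaim1, hclaim2, hTR, hexp]
  have hSle : ∑ t : Fin T, ∫ ω, (L (w t ω) - L wstar) ∂μ
      ≤ Dw^2*K + Dw*(σ * Real.sqrt T) + 2*B*Dw*T + 2*B*Dw*G*T/(σ * Real.sqrt T) := by
    have h1 : (2*η - η^2*K) * (∑ t : Fin T, ∫ ω, (L (w t ω) - L wstar) ∂μ)
        ≤ (2*η - η^2*K) * (Dw^2*K + Dw*(σ * Real.sqrt T) + 2*B*Dw*T
            + 2*B*Dw*G*T/(σ * Real.sqrt T)) := le_trans hsum htarget
    exact le_of_mul_le_mul_left h1 hcoef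
  have e2 : (T:ℝ)*(Dw*σ/Real.sqrt T) = Dw*(σ * Real.sqrt T) := by
    calc (T:ℝ)*(Dw*σ/Real.sqrt T) = Dw*σ*((T:ℝ)/Real.sqrt T) := by ring
      _ = Dw*σ*Real.sqrt T := by rw [Real.div_sqrt]
      _ = Dw*(σ * Real.sqrt T) := by ring
  have hfinal : (T:ℝ) * (Dw ^ 2 * K / T + Dw * σ / Real.sqrt T
      + 2 * B * Dw * (1 + G / (σ * Real.sqrt T)))
      = Dw^2*K + Dw*(σ * Real.sqrt T) + 2*B*Dw*T + 2*B*Dw*G*T/(σ * Real.sqrt T) := by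
    have e1 : (T:ℝ)*(Dw^2*K/T) = Dw^2*K := by field_simp
    have e3 : (T:ℝ)*(2*B*Dw*(1 + G/(σ * Real.sqrt T)))
        = 2*B*Dw*T + 2*B*Dw*G*T/(σ * Real.sqrt T) := by ring
    calc (T:ℝ) * (Dw ^ 2 * K / T + Dw * σ / Real.sqrt T
        + 2 * B * Dw * (1 + G / (σ * Real.sqrt T)))
        = (T:ℝ)*(Dw^2*K/T) + (T:ℝ)*(Dw*σ/Real.sqrt T)
          + (T:ℝ)*(2*B*Dw*(1 + G/(σ * Real.sqrt T))) := by ring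
      _ = _ := by rw [e1, e2, e3]; ring
  calc (1/(T:ℝ)) * ∑ t : Fin T, ∫ ω, (L (w t ω) - L wstar) ∂μ
      ≤ (1/(T:ℝ)) * ((T:ℝ) * (Dw ^ 2 * K / T + Dw * σ / Real.sqrt T
          + 2 * B * Dw * (1 + G / (σ * Real.sqrt T)))) := by
        refine mul_le_mul_of_nonneg_left ?_ (by positivity)
        rw [hfinal]
        exact hSle
    _ = Dw ^ 2 * K / T + Dw * σ / Real.sqrt T
          + 2 * B * Dw * (1 + G / (σ * Real.sqrt T)) := by
        rw [← mul_assoc, one_div, inv_mul_cancel₀ (ne_of_gt hT'), one_mul]
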